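/- For all n, k ≥ 0 and real α, (d/dz)^k [ z^{-α} e^{z} L_n^{-α}(-z) ] = (n+1)(n+2)···(n+k) · z^{-α-k} e^{z} L_{n+k}^{-α-k}(-z) for z > 0. -/

import Mathlib

open Finset Real

/-- Generalized Laguerre polynomial `L_n^α(z) = ∑_{k=0}^n (-1)^k binom(n+α, n-k) z^k / k!`,
where `binom(n+α, n-k) = (∏_{j=k+1}^{n} (α+j)) / (n-k)!`. -/
noncomputable def laguerre (n : ℕ) (α : ℝ) (z : ℝ) : ℝ :=
  ∑ k ∈ Finset.range (n + 1),
    (-1 : ℝ) ^ k * ((∏ j ∈ Finset.Ico (k + 1) (n + 1), (α + (j : ℝ))) /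
      ((n - k).factorial * k.factorial)) * z ^ k

noncomputable def lagC (n : ℕ) (β : ℝ) (k : ℕ) : ℝ :=
  (∏ j ∈ Finset.Ico (k + 1) (n + 1), (β + (j : ℝ))) / ((n - k).factorial * k.factorial)

lemma laguerre_neg (n : ℕ) (β : ℝ) (z : ℝ) :
    laguerre n β (-z) = ∑ k ∈ Finset.range (n+1), lagC n β k * z ^ k := by
  unfold laguerre lagC
  refine Finset.sum_congr rfl fun k _ => ?_
  have h : ((-1:ℝ)) ^ k * (-1:ℝ) ^ k = 1 := by rw [← mul_pow]; norm_num
  rw [neg_pow z k, show ((-1:ℝ)) ^ k *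
      ((∏ j ∈ Finset.Ico (k + 1) (n + 1), (β + (j : ℝ))) /
      ((n - k).factorial * k.factorial)) * ((-1) ^ k * z ^ k)
    = ((-1:ℝ)^k * (-1)^k) * (((∏ j ∈ Finset.Ico (k + 1) (n + 1), (β + (j : ℝ))) /
      ((n - k).factorial * k.factorial)) * z ^ k) from by ring, h, one_mul]

lemma prod_shift (n k : ℕ) (β : ℝ) :
    ∏ j ∈ Finset.Ico (k + 1) (n + 2), (β - 1 + (j : ℝ)) =
      ∏ j ∈ Finset.Ico k (n + 1), (β + (j : ℝ)) := by
  rw [Finset.prod_Ico_eq_prod_range, Finset.prod_Ico_eq_prod_range]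
  have h : n + 2 - (k+1) = n + 1 - k := by omega
  rw [h]
  refine Finset.prod_congr rfl fun j _ => ?_
  push_cast
  ring

lemma coeffB (n : ℕ) (β : ℝ) :
    ((n:ℝ)+1) * lagC (n+1) (β-1) 0 = β * lagC n β 0 := by
  unfold lagC
  rw [show (0:ℕ)+1 = 1 from rfl, prod_shift,
    Finset.prod_eq_prod_Ico_succ_bot (by omega) (fun j => β + (j:ℝ))]
  simp [Nat.factorial_succ]
  field_simp

lemma coeffC (n : ℕ) (β : ℝ) :
    ((n:ℝ)+1) * lagC (n+1) (β-1) (n+1) = lagC n β n := by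
  unfold lagC
  simp [Nat.factorial_succ]
  field_simp

lemma coeffA (n k : ℕ) (β : ℝ) (h2 : k + 1 ≤ n) :
    ((n:ℝ)+1) * lagC (n+1) (β-1) (k+1) = (β + ((k:ℝ)+1)) * lagC n β (k+1) + lagC n β k := by
  unfold lagC
  rw [prod_shift,
    Finset.prod_eq_prod_Ico_succ_bot (by omega : k+1 < n+1) (fun j => β + (j:ℝ))]
  set d := n - (k+1) with hd
  have e1 : n + 1 - (k+1) = d + 1 := by omega
  have e2 : n - k = d + 1 := by omega
  have e4 : (n:ℝ) = (d:ℝ) + k + 1 := by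
    have : n = d + k + 1 := by omega
    rw [this]; push_cast; ring
  rw [e1, e2, e4, Nat.factorial_succ d, Nat.factorial_succ k]
  have f1 : ((d.factorial : ℝ)) ≠ 0 := Nat.cast_ne_zero.mpr (Nat.factorial_ne_zero _)
  have f2 : ((k.factorial : ℝ)) ≠ 0 := Nat.cast_ne_zero.mpr (Nat.factorial_ne_zero _)
  have f3 : ((d:ℝ)+1) ≠ 0 := by positivity
  have f4 : ((k:ℝ)+1) ≠ 0 := by positivity
  push_cast
  field_simp
  ring

lemma key_sum (n : ℕ) (β : ℝ) (z : ℝ) :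
    ((n:ℝ)+1) * ∑ k ∈ Finset.range (n+2), lagC (n+1) (β-1) k * z ^ k
      = ∑ k ∈ Finset.range (n+1), lagC n β k * ((β + (k:ℝ)) * z ^ k + z ^ (k+1)) := by
  rw [Finset.mul_sum,
    Finset.sum_range_succ' (fun k => ((n:ℝ)+1) * (lagC (n+1) (β-1) k * z ^ k)) (n+1),
    Finset.sum_range_succ]
  have hrhs : ∀ k, lagC n β k * ((β + (k:ℝ)) * z ^ k + z ^ (k+1))
      = (β + (k:ℝ)) * lagC n β k * z ^ k + lagC n β k * z ^ (k+1) := fun k => by ring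
  simp only [hrhs]
  rw [Finset.sum_add_distrib,
    Finset.sum_range_succ' (fun k => (β + (k:ℝ)) * lagC n β k * z ^ k) n,
    Finset.sum_range_succ (fun k => lagC n β k * z ^ (k+1)) n]
  have hA : ∀ k ∈ Finset.range n, ((n:ℝ)+1) * (lagC (n+1) (β-1) (k+1) * z ^ (k+1))
      = (β + (((k:ℕ):ℝ)+1)) * lagC n β (k+1) * z ^ (k+1) + lagC n β k * z ^ (k+1) := by
    intro k hk
    rw [Finset.mem_range] at hk
    rw [show ((n:ℝ)+1) * (lagC (n+1) (β-1) (k+1) * z ^ (k+1))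
        = (((n:ℝ)+1) * lagC (n+1) (β-1) (k+1)) * z^(k+1) from by ring,
      coeffA n k β (by omega)]
    ring
  rw [Finset.sum_congr rfl hA, Finset.sum_add_distrib]
  have hB := coeffB n β
  have hC := coeffC n β
  push_cast
  linear_combination z^(n+1) * hC + hB

lemma hasDerivAt_step (n : ℕ) (α : ℝ) (z : ℝ) (hz : 0 < z) :
    HasDerivAt (fun t : ℝ => t ^ (-α) * Real.exp t * laguerre n (-α) (-t))
      (((n:ℝ)+1) * (z ^ (-α-1) * Real.exp z * laguerre (n+1) (-α-1) (-z))) z := by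
  set β := -α with hβ
  have hG : HasDerivAt
      (fun t : ℝ => ∑ k ∈ Finset.range (n+1), lagC n β k * (t ^ ((k:ℝ) + β) * Real.exp t))
      (∑ k ∈ Finset.range (n+1), lagC n β k *
        ((((k:ℝ)+β) * z ^ ((k:ℝ)+β-1)) * Real.exp z + z ^ ((k:ℝ)+β) * Real.exp z)) z := by
    apply HasDerivAt.fun_sum
    intro k _
    exact ((Real.hasDerivAt_rpow_const (Or.inl hz.ne')).mul (Real.hasDerivAt_exp z)).const_mul _
  have hsplit : ∀ t : ℝ, 0 < t → ∀ (c : ℝ) (j : ℕ), t ^ ((j:ℝ) + c) = t ^ c * t ^ j := by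
    intro t ht c j
    rw [add_comm, Real.rpow_add ht, Real.rpow_natCast]
  have heq : (fun t : ℝ => t ^ (-α) * Real.exp t * laguerre n (-α) (-t)) =ᶠ[nhds z]
      (fun t : ℝ => ∑ k ∈ Finset.range (n+1), lagC n β k * (t ^ ((k:ℝ) + β) * Real.exp t)) := by
    filter_upwards [Ioi_mem_nhds hz] with t ht
    rw [laguerre_neg, Finset.mul_sum]
    refine Finset.sum_congr rfl fun k _ => ?_
    rw [hsplit t ht β k, ← hβ]
    ring
  have hval : (∑ k ∈ Finset.range (n+1), lagC n β k *
        ((((k:ℝ)+β) * z ^ ((k:ℝ)+β-1)) * Real.exp z + z ^ ((k:ℝ)+β) * Real.exp z))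
      = ((n:ℝ)+1) * (z ^ (-α-1) * Real.exp z * laguerre (n+1) (-α-1) (-z)) := by
    have h1 : (-α-1 : ℝ) = β - 1 := by rw [hβ]
    rw [h1, laguerre_neg]
    rw [show z ^ (β-1) * Real.exp z * (∑ k ∈ Finset.range (n+1+1), lagC (n+1) (β-1) k * z ^ k)
        = z ^ (β-1) * Real.exp z * ∑ k ∈ Finset.range (n+2), lagC (n+1) (β-1) k * z ^ k from rfl]
    rw [show ((n:ℝ)+1) * (z ^ (β-1) * Real.exp z * ∑ k ∈ Finset.range (n+2), lagC (n+1) (β-1) k * z ^ k)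
        = z ^ (β-1) * Real.exp z * (((n:ℝ)+1) * ∑ k ∈ Finset.range (n+2), lagC (n+1) (β-1) k * z ^ k) from by ring]
    rw [key_sum, Finset.mul_sum]
    refine Finset.sum_congr rfl fun k _ => ?_
    have e1 : (k:ℝ) + β - 1 = (β - 1) + (k:ℝ) := by ring
    have e2 : (k:ℝ) + β = (β - 1) + ((k:ℝ) + 1) := by ring
    rw [e1, e2, Real.rpow_add hz (β-1) k, Real.rpow_add hz (β-1) ((k:ℝ)+1),
      Real.rpow_natCast, show ((k:ℝ)+1) = ((k+1 : ℕ) : ℝ) from by push_cast; ring,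
      Real.rpow_natCast]
    push_cast
    ring
  exact hval ▸ hG.congr_of_eventuallyEq heq

lemma main_aux (n : ℕ) (α : ℝ) : ∀ k : ℕ, ∀ z : ℝ, 0 < z →
    iteratedDeriv k (fun t : ℝ => t ^ (-α) * Real.exp t * laguerre n (-α) (-t)) z =
      (∏ i ∈ Finset.range k, ((n : ℝ) + 1 + i)) * z ^ (-α - k) * Real.exp z *
        laguerre (n + k) (-α - k) (-z) := by
  intro k
  induction k with
  | zero => intro z hz; simp
  | succ k ih =>
    intro z hz
    rw [iteratedDeriv_succ]
    have hev : iteratedDeriv k (fun t : ℝ => t ^ (-α) * Real.exp t * laguerre n (-α) (-t))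
        =ᶠ[nhds z] (fun t => (∏ i ∈ Finset.range k, ((n : ℝ) + 1 + i)) *
          (t ^ (-(α + k)) * Real.exp t * laguerre (n + k) (-(α + k)) (-t))) := by
      filter_upwards [Ioi_mem_nhds hz] with t ht
      rw [ih t ht, show -α - (k:ℝ) = -(α + (k:ℝ)) from by ring]
      ring
    rw [hev.deriv_eq]
    have hstep := ((hasDerivAt_step (n+k) (α + k) z hz).const_mul
      (∏ i ∈ Finset.range k, ((n : ℝ) + 1 + i)))
    rw [hstep.deriv, Finset.prod_range_succ]
    have e : -α - ((k+1 : ℕ) : ℝ) = -(α + (k:ℝ)) - 1 := by push_cast; ring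
    rw [e, show n + (k+1) = n + k + 1 from rfl]
    push_cast
    ring

/-- For all `n, k ≥ 0`, real `α`, and `z > 0`,
`(d/dz)^k [z^{-α} e^z L_n^{-α}(-z)] = (n+1)_k z^{-α-k} e^z L_{n+k}^{-α-k}(-z)`. -/
theorem laguerre_iteratedDeriv_shadow_conj (n k : ℕ) (α : ℝ) (z : ℝ) (hz : 0 < z) :
    iteratedDeriv k (fun t : ℝ => t ^ (-α) * Real.exp t * laguerre n (-α) (-t)) z =
      (∏ i ∈ Finset.range k, ((n : ℝ) + 1 + i)) * z ^ (-α - k) * Real.exp z *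
        laguerre (n + k) (-α - k) (-z) := by
  exact main_aux n α k z hz
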